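/- Let F(z₁,z₂,w) = (z₁√w, z₂ w, w), using the principal square root on {Re w > 0}. If (z₁*,z₂*,w*) = F(z₁,z₂,w) satisfies Im w* = |z₁*|² + |z₂*|² and Re w > 0, then w·(1 − 2i|z₂|² w̄)² = w̄·(i|z₁|² + √(1 − 2i|z₂|² w̄ − |z₁|⁴))², for (z₁,z₂,w) in a sufficiently small neighborhood of (0,0,0) intersected with {Re w > 0}. -/

import Mathlib

/-- The blow-up `F(z₁,z₂,w) = (z₁√w, z₂w, w)` (principal square root on `Re w > 0`):
if the image lies on the strictly pseudoconvex quadric `Im w* = |z₁*|² + |z₂*|²`, then in a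
sufficiently small neighbourhood of the origin intersected with `{Re w > 0}` one has
`w(1 − 2i|z₂|²w̄)² = w̄(i|z₁|² + √(1 − 2i|z₂|²w̄ − |z₁|⁴))²`. -/
theorem stmt_4 : ∃ ε > (0:ℝ), ∀ z₁ z₂ w : ℂ,
    ‖z₁‖ < ε → ‖z₂‖ < ε → ‖w‖ < ε → 0 < w.re →
    w.im = ‖z₁ * w ^ ((1 : ℂ)/2)‖ ^ 2 + ‖z₂ * w‖ ^ 2 →
    w * (1 - 2 * Complex.I * ((‖z₂‖ : ℂ)) ^ 2 * (starRingEnd ℂ) w) ^ 2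
      = (starRingEnd ℂ) w *
        (Complex.I * ((‖z₁‖ : ℂ)) ^ 2 +
          (1 - 2 * Complex.I * ((‖z₂‖ : ℂ)) ^ 2 * (starRingEnd ℂ) w
            - ((‖z₁‖ : ℂ)) ^ 4) ^ ((1 : ℂ)/2)) ^ 2 := by
  refine ⟨1, one_pos, fun z₁ z₂ w _ _ _ hwre him => ?_⟩
  have hw0 : w ≠ 0 := fun h => by simp [h] at hwre
  set r : ℝ := ‖w‖ with hrdef
  have hr0 : (0:ℝ) < r := norm_pos_iff.mpr hw0
  have hr' : (r:ℂ) ≠ 0 := by exact_mod_cast hr0.ne'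
  set A : ℂ := ((‖z₁‖ : ℂ)) with hA
  set B : ℂ := ((‖z₂‖ : ℂ)) with hB
  have habs : ‖w ^ ((1:ℂ)/2)‖ ^ 2 = r := by
    rw [Complex.norm_cpow_of_ne_zero hw0]
    norm_num
    rw [← Real.sqrt_eq_rpow, Real.sq_sqrt hr0.le]
  have him' : w.im = (‖z₁‖)^2 * r + (‖z₂‖)^2 * r^2 := by
    rw [him, norm_mul, norm_mul, mul_pow, mul_pow, habs]
  have hIm : w - (starRingEnd ℂ) w = 2*Complex.I*(A^2*(r:ℂ) + B^2*(r:ℂ)^2) := by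
    rw [Complex.sub_conj, him']
    push_cast
    ring
  have hconj : w * (starRingEnd ℂ) w = (r:ℂ)^2 := by
    rw [Complex.mul_conj, hrdef, ← Complex.sq_norm]
    push_cast
    ring
  set s : ℂ := ((starRingEnd ℂ) w + Complex.I*A^2*(r:ℂ)) / (r:ℂ) with hs
  have hs_re : 0 < s.re := by
    have h1 : s.re = w.re / r := by
      rw [hs, hA, Complex.div_ofReal_re]
      simp [← Complex.ofReal_pow]
    rw [h1]; positivity
  have hu : 1 - 2*Complex.I*B^2*(starRingEnd ℂ) w - A^4 = s^2 := by
    rw [hs]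
    field_simp
    linear_combination ((starRingEnd ℂ) w)*hIm - hconj - A^4*(r:ℂ)^2*Complex.I_sq
  have key : Complex.I*A^2 + s = w * (1 - 2*Complex.I*B^2*(starRingEnd ℂ) w) / r := by
    rw [hs]
    field_simp
    linear_combination -hIm + 2*Complex.I*B^2*hconj
  rw [hu, show ((1:ℂ)/2) = (2⁻¹:ℂ) by norm_num, Complex.sq_cpow_two_inv hs_re, key]
  field_simp
  linear_combination -((1 - 2*Complex.I*B^2*(starRingEnd ℂ) w)^2) * hconj
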